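/- arXiv:1305.0049 — 2 statements merged into one kernel-verified Lean document; each statement's English description precedes it below -/
import Mathlib

section
/- Let (Ω, 𝓕, P) be a probability space and T : Ω → [0, ∞) a measurable function such that P({T ≥ t}) ≤ M·e^{−α₀ t} for all t ≥ 0, where M > 0 and α₀ > 0. Then for every measurable set E ⊆ Ω, every α with 0 < α ≤ α₀/2, and every β' > 0: ∫_E exp(α T) dP ≤ e^{β'}·P(E) + (M·e^{α₀ + β'}/(1 − e^{−α₀/2}))·e^{−α₀ β'/α}. -/
open MeasureTheory

/-- Quantitative truncated exponential moment bound: if `T ≥ 0` has exponential tail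
`P(T ≥ t) ≤ M e^{−α₀ t}`, then for every measurable `E`, every `0 < α ≤ α₀/2` and `β' > 0`,
`∫_E exp(α T) dP ≤ e^{β'} P(E) + (M e^{α₀+β'}/(1 − e^{−α₀/2})) e^{−α₀ β'/α}`. -/
theorem integral_exp_le_of_tail_bound {Ω : Type*} [MeasurableSpace Ω]
    (P : Measure Ω) [IsProbabilityMeasure P]
    (T : Ω → ℝ) (hTmeas : Measurable T) (hT0 : ∀ ω, 0 ≤ T ω)
    (M α₀ : ℝ) (hM : 0 < M) (hα₀ : 0 < α₀)
    (htail : ∀ t : ℝ, 0 ≤ t → (P {ω | t ≤ T ω}).toReal ≤ M * Real.exp (-α₀ * t))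
    (E : Set Ω) (hE : MeasurableSet E)
    (α : ℝ) (hα : 0 < α) (hαα₀ : α ≤ α₀ / 2) (β' : ℝ) (hβ' : 0 < β') :
    ∫ ω in E, Real.exp (α * T ω) ∂P ≤
      Real.exp β' * (P E).toReal +
        (M * Real.exp (α₀ + β') / (1 - Real.exp (-α₀ / 2))) * Real.exp (-α₀ * β' / α) := by
  set r := Real.exp (-α₀ / 2) with hrdef
  have hr0 : 0 < r := Real.exp_pos _
  have hr1 : r < 1 := by
    rw [hrdef, Real.exp_lt_one_iff]; linarith
  have h1r : (0:ℝ) < 1 - r := by linarith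
  obtain ⟨t₀, hαt₀, ht₀pos, he⟩ :
      ∃ t₀ : ℝ, α * t₀ = β' ∧ 0 < t₀ ∧ -α₀ * t₀ = -α₀ * β' / α :=
    ⟨β' / α, by field_simp, div_pos hβ' hα, by ring⟩
  set S : ℕ → Set Ω := fun k => {ω | t₀ + k ≤ T ω} with hSdef
  have hS : ∀ k, MeasurableSet (S k) := fun k => measurableSet_le measurable_const hTmeas
  set g : Ω → ENNReal := fun ω =>
    ∑' k : ℕ, Set.indicator (S k) (fun _ => ENNReal.ofReal (Real.exp (β' + α * (k + 1)))) ω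
    with hgdef
  have hgmeas : Measurable g := by
    apply Measurable.ennreal_tsum
    intro k
    exact measurable_const.indicator (hS k)
  -- pointwise bound
  have key : ∀ ω, ENNReal.ofReal (Real.exp (α * T ω)) ≤ ENNReal.ofReal (Real.exp β') + g ω := by
    intro ω
    by_cases h : T ω < t₀
    · have : Real.exp (α * T ω) ≤ Real.exp β' := by
        apply Real.exp_le_exp.mpr
        calc α * T ω ≤ α * t₀ := by nlinarith
          _ = β' := hαt₀
      exact le_add_right (ENNReal.ofReal_le_ofReal this)
    · push_neg at h
      set k := ⌊T ω - t₀⌋₊ with hkdef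
      have hk0 : (0:ℝ) ≤ T ω - t₀ := by linarith
      have hk1 : T ω - t₀ < k + 1 := Nat.lt_floor_add_one _
      have hk2 : (k : ℝ) ≤ T ω - t₀ := Nat.floor_le hk0
      have hmem : ω ∈ S k := by
        simp only [hSdef, Set.mem_setOf_eq]; linarith
      have hb : ENNReal.ofReal (Real.exp (α * T ω)) ≤
          ENNReal.ofReal (Real.exp (β' + α * (k + 1))) := by
        apply ENNReal.ofReal_le_ofReal
        apply Real.exp_le_exp.mpr
        have : α * T ω ≤ α * (t₀ + (k + 1)) := by nlinarith
        calc α * T ω ≤ α * (t₀ + (k + 1)) := this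
          _ = β' + α * (k + 1) := by rw [mul_add, hαt₀]
      refine le_add_left (hb.trans ?_)
      have := ENNReal.le_tsum (f := fun k : ℕ =>
        Set.indicator (S k) (fun _ => ENNReal.ofReal (Real.exp (β' + α * (k + 1)))) ω) k
      rwa [Set.indicator_of_mem hmem] at this
  -- tail bound in ENNReal
  have tailk : ∀ k : ℕ, P (S k) ≤ ENNReal.ofReal (M * Real.exp (-α₀ * (t₀ + k))) := by
    intro k
    have h1 := htail (t₀ + k) (by positivity)
    rw [← ENNReal.ofReal_toReal (measure_ne_top P (S k))]
    exact ENNReal.ofReal_le_ofReal h1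
  -- geometric bound constant
  set A : ℝ := M * Real.exp (α₀ / 2 + β') * Real.exp (-α₀ * t₀) with hAdef
  have hA0 : 0 ≤ A := by positivity
  have termle : ∀ k : ℕ,
      ENNReal.ofReal (Real.exp (β' + α * (k + 1))) * P (S k) ≤ ENNReal.ofReal (A * r ^ k) := by
    intro k
    calc ENNReal.ofReal (Real.exp (β' + α * (k + 1))) * P (S k)
        ≤ ENNReal.ofReal (Real.exp (β' + α * (k + 1))) *
            ENNReal.ofReal (M * Real.exp (-α₀ * (t₀ + k))) :=
          mul_le_mul_right (tailk k) _
      _ = ENNReal.ofReal (Real.exp (β' + α * (k + 1)) * (M * Real.exp (-α₀ * (t₀ + k)))) := by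
          rw [← ENNReal.ofReal_mul (Real.exp_nonneg _)]
      _ ≤ ENNReal.ofReal (A * r ^ k) := by
          apply ENNReal.ofReal_le_ofReal
          have hrk : r ^ k = Real.exp (-(α₀ / 2) * k) := by
            rw [hrdef, ← Real.exp_nat_mul]; ring_nf
          rw [hrk, hAdef]
          have lhs_eq : Real.exp (β' + α * (k + 1)) * (M * Real.exp (-α₀ * (t₀ + k))) =
              M * Real.exp (β' + α * (k + 1) + -α₀ * (t₀ + k)) := by
            simp only [Real.exp_add]; ring
          have rhs_eq : M * Real.exp (α₀ / 2 + β') * Real.exp (-α₀ * t₀) *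
              Real.exp (-(α₀ / 2) * k) =
              M * Real.exp (α₀ / 2 + β' + -α₀ * t₀ + -(α₀ / 2) * k) := by
            simp only [Real.exp_add]; ring
          rw [lhs_eq, rhs_eq]
          apply mul_le_mul_of_nonneg_left _ hM.le
          apply Real.exp_le_exp.mpr
          have hk0 : (0:ℝ) ≤ (k:ℝ) := Nat.cast_nonneg k
          nlinarith
  -- sum of geometric series
  have hsum : ∑' k : ℕ, ENNReal.ofReal (A * r ^ k) = ENNReal.ofReal (A / (1 - r)) := by
    rw [← ENNReal.ofReal_tsum_of_nonneg (fun k => by positivity)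
      ((summable_geometric_of_lt_one hr0.le hr1).mul_left A)]
    congr 1
    rw [tsum_mul_left, tsum_geometric_of_lt_one hr0.le hr1]
    rw [div_eq_mul_inv]
  -- main lintegral bound
  have lint : ∫⁻ ω in E, ENNReal.ofReal (Real.exp (α * T ω)) ∂P ≤
      ENNReal.ofReal (Real.exp β') * P E + ENNReal.ofReal (A / (1 - r)) := by
    calc ∫⁻ ω in E, ENNReal.ofReal (Real.exp (α * T ω)) ∂P
        ≤ ∫⁻ ω in E, (ENNReal.ofReal (Real.exp β') + g ω) ∂P :=
          lintegral_mono fun ω => key ω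
      _ = ENNReal.ofReal (Real.exp β') * P E + ∫⁻ ω in E, g ω ∂P := by
          rw [lintegral_add_left measurable_const, setLIntegral_const]
      _ ≤ ENNReal.ofReal (Real.exp β') * P E + ∫⁻ ω, g ω ∂P := by
          gcongr
          exact Measure.restrict_le_self
      _ ≤ ENNReal.ofReal (Real.exp β') * P E + ENNReal.ofReal (A / (1 - r)) := by
          gcongr
          rw [hgdef]
          rw [lintegral_tsum (fun k => (measurable_const.indicator (hS k)).aemeasurable)]
          calc ∑' k : ℕ, ∫⁻ ω, Set.indicator (S k)
                (fun _ => ENNReal.ofReal (Real.exp (β' + α * (k + 1)))) ω ∂P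
              = ∑' k : ℕ, ENNReal.ofReal (Real.exp (β' + α * (k + 1))) * P (S k) := by
                refine tsum_congr fun k => ?_
                simp [lintegral_indicator (hS k), setLIntegral_const]
            _ ≤ ∑' k : ℕ, ENNReal.ofReal (A * r ^ k) := ENNReal.tsum_le_tsum termle
            _ = ENNReal.ofReal (A / (1 - r)) := hsum
  -- convert to Bochner integral
  have hnn : 0 ≤ᵐ[P.restrict E] fun ω => Real.exp (α * T ω) :=
    Filter.Eventually.of_forall fun ω => (Real.exp_pos _).le
  have hmeas : AEStronglyMeasurable (fun ω => Real.exp (α * T ω)) (P.restrict E) :=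
    ((Real.measurable_exp.comp (measurable_const.mul hTmeas))).aestronglyMeasurable
  rw [integral_eq_lintegral_of_nonneg_ae hnn hmeas]
  have hfin : ENNReal.ofReal (Real.exp β') * P E + ENNReal.ofReal (A / (1 - r)) ≠ ⊤ := by
    apply ENNReal.add_ne_top.mpr
    constructor
    · exact ENNReal.mul_ne_top ENNReal.ofReal_ne_top (measure_ne_top P E)
    · exact ENNReal.ofReal_ne_top
  have := ENNReal.toReal_mono hfin lint
  refine this.trans ?_
  rw [ENNReal.toReal_add (ENNReal.mul_ne_top ENNReal.ofReal_ne_top (measure_ne_top P E))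
    ENNReal.ofReal_ne_top, ENNReal.toReal_mul, ENNReal.toReal_ofReal (Real.exp_nonneg _),
    ENNReal.toReal_ofReal (by positivity : (0:ℝ) ≤ A / (1 - r))]
  have hmain : A / (1 - r) ≤
      M * Real.exp (α₀ + β') / (1 - r) * Real.exp (-α₀ * β' / α) := by
    calc A / (1 - r)
        = M * Real.exp (α₀ / 2 + β') * Real.exp (-α₀ * β' / α) / (1 - r) := by
          rw [hAdef, he]
      _ ≤ M * Real.exp (α₀ + β') * Real.exp (-α₀ * β' / α) / (1 - r) := by
          gcongr
          linarith
      _ = M * Real.exp (α₀ + β') / (1 - r) * Real.exp (-α₀ * β' / α) := by ring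
  exact add_le_add_right hmain _
end

section
/- Let G be a group and let ρ₀ : G → SL(2,ℝ) and ρ : G → SL(2,ℂ) be group homomorphisms. Assume: (i) there exists C > 0 such that log ‖ρ(g)‖ ≤ C · dist(i, ρ₀(g)•i) for every g ∈ G; and (ii) there exists c₀ > 0 such that ‖ρ₀(g)‖ ≥ 1 + c₀ for every g ∈ G with ρ₀(g) ∉ {I, −I}. Then there exists β > 0 such that ‖ρ(g)‖ ≤ ‖ρ₀(g)‖^β for every g ∈ G. -/
open scoped MatrixGroups Matrix.Norms.L2Operator

private lemma col_sq_le (A : Matrix (Fin 2) (Fin 2) ℝ) (j : Fin 2) :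
    (A 0 j)^2 + (A 1 j)^2 ≤ ‖A‖^2 := by
  have h := A.l2_opNorm_mulVec (EuclideanSpace.single j (1:ℝ))
  rw [EuclideanSpace.norm_single, norm_one, mul_one] at h
  have hn : ‖(EuclideanSpace.equiv (Fin 2) ℝ).symm (A.mulVec (EuclideanSpace.single j (1:ℝ)))‖ ^ 2
      = (A 0 j)^2 + (A 1 j)^2 := by
    rw [EuclideanSpace.norm_eq]
    rw [Real.sq_sqrt (by positivity)]
    have he : ∀ i : Fin 2, ((EuclideanSpace.equiv (Fin 2) ℝ).symm (A.mulVec (EuclideanSpace.single j (1:ℝ)))) i = A i j := by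
      intro i
      show (A.mulVec (EuclideanSpace.single j (1:ℝ))) i = A i j
      have : (EuclideanSpace.single j (1:ℝ) : Fin 2 → ℝ) = Pi.single j 1 := rfl
      rw [this, Matrix.mulVec_single]; simp
    simp [Fin.sum_univ_two, he, sq_abs]
  calc (A 0 j)^2 + (A 1 j)^2 = _ := hn.symm
    _ ≤ ‖A‖^2 := by
      apply pow_le_pow_left₀ (norm_nonneg _) h

private lemma norm_one_mat : ‖(1 : Matrix (Fin 2) (Fin 2) ℝ)‖ = 1 := by
  rw [Matrix.cstar_norm_def, map_one, ContinuousLinearMap.one_def, ContinuousLinearMap.norm_id]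

private lemma cosh_dist_le_sq (g : SL(2, ℝ)) :
    Real.cosh (dist UpperHalfPlane.I (g • UpperHalfPlane.I)) ≤
      ‖(g : Matrix (Fin 2) (Fin 2) ℝ)‖ ^ 2 := by
  set A : Matrix (Fin 2) (Fin 2) ℝ := (g : Matrix (Fin 2) (Fin 2) ℝ) with hA
  set a := A 0 0; set b := A 0 1; set c := A 1 0; set d := A 1 1
  have hdet : a * d - b * c = 1 := by
    have := g.prop
    rw [Matrix.det_fin_two] at this
    exact this
  have hD : 0 < c ^ 2 + d ^ 2 := by
    rcases lt_or_eq_of_le (by positivity : (0:ℝ) ≤ c ^ 2 + d ^ 2) with h | h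
    · exact h
    · exfalso
      have hc : c = 0 := by nlinarith [sq_nonneg c, sq_nonneg d]
      have hd : d = 0 := by nlinarith [sq_nonneg c, sq_nonneg d]
      rw [hc, hd] at hdet; norm_num at hdet
  have hden : ((c : ℂ) * Complex.I + d) ≠ 0 := by
    intro h
    have h1 : ((c : ℂ) * Complex.I + d).im = 0 := by rw [h]; simp
    have h2 : ((c : ℂ) * Complex.I + d).re = 0 := by rw [h]; simp
    simp at h1 h2
    nlinarith
  have hw : ((g • UpperHalfPlane.I : UpperHalfPlane) : ℂ)
      = ((a : ℂ) * Complex.I + b) / ((c : ℂ) * Complex.I + d) := by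
    rw [UpperHalfPlane.specialLinearGroup_apply]
    simp [UpperHalfPlane.coe_mk, UpperHalfPlane.coe_I]
    rfl
  have him : (g • UpperHalfPlane.I : UpperHalfPlane).im = 1 / (c ^ 2 + d ^ 2) := by
    have : (g • UpperHalfPlane.I : UpperHalfPlane).im
        = (((a : ℂ) * Complex.I + b) / ((c : ℂ) * Complex.I + d)).im := by
      rw [UpperHalfPlane.im, hw]
    rw [this, Complex.div_im]
    simp [Complex.normSq_apply]
    rw [show (a : ℝ) * d / (d*d + c*c) - b * c / (d*d + c*c) = (a*d - b*c)/(c^2+d^2) by ring,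
      hdet, one_div]
  have hdist : dist (UpperHalfPlane.I : ℂ) ((g • UpperHalfPlane.I : UpperHalfPlane) : ℂ) ^ 2
      = ((b + c) ^ 2 + (d - a) ^ 2) / (c ^ 2 + d ^ 2) := by
    rw [Complex.dist_eq, Complex.sq_norm, hw, UpperHalfPlane.coe_I]
    have : Complex.I - ((a : ℂ) * Complex.I + b) / ((c : ℂ) * Complex.I + d)
        = ((-(b + c) : ℝ) + ((d - a : ℝ)) * Complex.I) / ((c : ℂ) * Complex.I + d) := by
      rw [eq_div_iff hden, sub_mul, div_mul_cancel₀ _ hden]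
      push_cast
      linear_combination (c : ℂ) * Complex.I_sq
    rw [this, map_div₀]
    have h1 : Complex.normSq ((-(b + c) : ℝ) + ((d - a : ℝ)) * Complex.I)
        = (b + c) ^ 2 + (d - a) ^ 2 := by
      simp [Complex.normSq_apply]
      ring
    have h2 : Complex.normSq ((c : ℂ) * Complex.I + d) = c ^ 2 + d ^ 2 := by
      simp [Complex.normSq_apply]
      ring
    rw [h1, h2]
  have hcosh : Real.cosh (dist UpperHalfPlane.I (g • UpperHalfPlane.I))
      = (a ^ 2 + b ^ 2 + c ^ 2 + d ^ 2) / 2 := by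
    rw [UpperHalfPlane.cosh_dist, UpperHalfPlane.I_im, him, hdist]
    field_simp
    ring_nf
    nlinarith [hdet]
  have h0 := col_sq_le A 0
  have h1 := col_sq_le A 1
  rw [hcosh]
  linarith

private lemma one_le_norm_sl2 (g : SL(2, ℝ)) :
    1 ≤ ‖(g : Matrix (Fin 2) (Fin 2) ℝ)‖ := by
  have h := cosh_dist_le_sq g
  have h1 : (1:ℝ) ≤ Real.cosh (dist UpperHalfPlane.I (g • UpperHalfPlane.I)) :=
    Real.one_le_cosh _
  nlinarith [norm_nonneg (g : Matrix (Fin 2) (Fin 2) ℝ)]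

private lemma dist_le_log (g : SL(2, ℝ)) :
    dist UpperHalfPlane.I (g • UpperHalfPlane.I) ≤
      Real.log 2 + 2 * Real.log ‖(g : Matrix (Fin 2) (Fin 2) ℝ)‖ := by
  set N := ‖(g : Matrix (Fin 2) (Fin 2) ℝ)‖ with hN
  have hN1 : 1 ≤ N := one_le_norm_sl2 g
  set t := dist UpperHalfPlane.I (g • UpperHalfPlane.I) with ht
  have hexp : Real.exp t ≤ 2 * N ^ 2 := by
    have h := cosh_dist_le_sq g
    have : Real.exp t ≤ 2 * Real.cosh t := by
      rw [Real.cosh_eq]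
      nlinarith [Real.exp_pos (-t)]
    nlinarith
  have := Real.log_le_log (Real.exp_pos t) hexp
  rw [Real.log_exp] at this
  calc t ≤ Real.log (2 * N ^ 2) := this
    _ = Real.log 2 + 2 * Real.log N := by
        rw [Real.log_mul (by norm_num) (by positivity), Real.log_pow]
        push_cast
        ring

/-- If `ρ₀ : G → SL(2,ℝ)` and `ρ : G → SL(2,ℂ)` are homomorphisms such that
`log ‖ρ(g)‖ ≤ C · dist(i, ρ₀(g)•i)` for all `g`, and the operator norms of the nontrivial
elements of `ρ₀(G)` are uniformly bounded away from `1`, then there is `β > 0` with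
`‖ρ(g)‖ ≤ ‖ρ₀(g)‖^β` for all `g`. Norms are operator norms on the 2-dimensional column space. -/
theorem opNorm_le_rpow_of_lipschitz {G : Type*} [Group G]
    (ρ₀ : G →* SL(2, ℝ)) (ρ : G →* SL(2, ℂ))
    (h₁ : ∃ C > 0, ∀ g : G,
      Real.log ‖((ρ g : Matrix (Fin 2) (Fin 2) ℂ))‖ ≤
        C * dist UpperHalfPlane.I ((ρ₀ g) • UpperHalfPlane.I))
    (h₂ : ∃ c₀ > 0, ∀ g : G,
      (ρ₀ g : Matrix (Fin 2) (Fin 2) ℝ) ≠ 1 → (ρ₀ g : Matrix (Fin 2) (Fin 2) ℝ) ≠ -1 →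
        1 + c₀ ≤ ‖(ρ₀ g : Matrix (Fin 2) (Fin 2) ℝ)‖) :
    ∃ β > 0, ∀ g : G,
      ‖(ρ g : Matrix (Fin 2) (Fin 2) ℂ)‖ ≤ ‖(ρ₀ g : Matrix (Fin 2) (Fin 2) ℝ)‖ ^ β := by
  obtain ⟨C, hC, hCle⟩ := h₁
  obtain ⟨c₀, hc₀, hc₀le⟩ := h₂
  set L := Real.log (1 + c₀) with hL
  have hLpos : 0 < L := Real.log_pos (by linarith)
  set B : ℝ := C * Real.log 2 / L + 2 * C with hB
  have hBnn : 0 ≤ B := by positivity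
  set n : ℕ := ⌈B⌉₊ + 1 with hn
  have hBn : B ≤ (n : ℝ) := by
    have := Nat.le_ceil B
    have h2 : ((⌈B⌉₊ : ℝ)) ≤ ((⌈B⌉₊ + 1 : ℕ) : ℝ) := by push_cast; linarith
    exact this.trans h2
  refine ⟨n, Nat.succ_pos _, fun g => ?_⟩
  set N := ‖(ρ₀ g : Matrix (Fin 2) (Fin 2) ℝ)‖ with hNdef
  have hN1 : 1 ≤ N := one_le_norm_sl2 (ρ₀ g)
  have hNpos : 0 < N := lt_of_lt_of_le one_pos hN1
  have hlogNnn : 0 ≤ Real.log N := Real.log_nonneg hN1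
  have hMpos : 0 < ‖(ρ g : Matrix (Fin 2) (Fin 2) ℂ)‖ := by
    rw [norm_pos_iff]
    intro h0
    have := (ρ g).prop
    rw [h0] at this
    simp at this
  -- key inequality in log form
  have hkey : Real.log ‖(ρ g : Matrix (Fin 2) (Fin 2) ℂ)‖ ≤ (n : ℝ) * Real.log N := by
    have hnN : B * Real.log N ≤ (n : ℝ) * Real.log N :=
      mul_le_mul_of_nonneg_right hBn hlogNnn
    by_cases htriv : (ρ₀ g : Matrix (Fin 2) (Fin 2) ℝ) = 1 ∨
        (ρ₀ g : Matrix (Fin 2) (Fin 2) ℝ) = -1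
    · -- trivial case: ρ₀ g acts trivially on I
      have hfix : (ρ₀ g) • UpperHalfPlane.I = UpperHalfPlane.I := by
        rcases htriv with h | h
        · have : ρ₀ g = 1 := Subtype.ext h
          rw [this, one_smul]
        · apply UpperHalfPlane.ext
          rw [UpperHalfPlane.specialLinearGroup_apply, UpperHalfPlane.coe_mk]
          have h00 : (ρ₀ g : Matrix (Fin 2) (Fin 2) ℝ) 0 0 = -1 := by rw [h]; simp
          have h01 : (ρ₀ g : Matrix (Fin 2) (Fin 2) ℝ) 0 1 = 0 := by rw [h]; simp
          have h10 : (ρ₀ g : Matrix (Fin 2) (Fin 2) ℝ) 1 0 = 0 := by rw [h]; simp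
          have h11 : (ρ₀ g : Matrix (Fin 2) (Fin 2) ℝ) 1 1 = -1 := by rw [h]; simp
          show ((algebraMap ℝ ℝ ((ρ₀ g : Matrix (Fin 2) (Fin 2) ℝ) 0 0) : ℂ) * _ + _) / _ = _
          rw [h00, h01, h10, h11]
          simp
      have := hCle g
      rw [hfix, dist_self, mul_zero] at this
      calc Real.log ‖(ρ g : Matrix (Fin 2) (Fin 2) ℂ)‖ ≤ 0 := this
        _ ≤ (n : ℝ) * Real.log N := by positivity
    · push_neg at htriv
      have hBig : 1 + c₀ ≤ N := hc₀le g htriv.1 htriv.2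
      have hlogN : L ≤ Real.log N := Real.log_le_log (by linarith) hBig
      have hd := dist_le_log (ρ₀ g)
      have hC2 := hCle g
      have hlog2 : (0:ℝ) ≤ Real.log 2 := Real.log_nonneg (by norm_num)
      have hstep : C * Real.log 2 ≤ (C * Real.log 2 / L) * Real.log N := by
        have h0 : (0:ℝ) ≤ C * Real.log 2 / L := by positivity
        have h1 : (C * Real.log 2 / L) * L ≤ (C * Real.log 2 / L) * Real.log N :=
          mul_le_mul_of_nonneg_left hlogN h0
        have h2 : C * Real.log 2 = (C * Real.log 2 / L) * L := by field_simp
        linarith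
      refine le_trans ?_ hnN
      calc Real.log ‖(ρ g : Matrix (Fin 2) (Fin 2) ℂ)‖
          ≤ C * (Real.log 2 + 2 * Real.log N) := by
            refine le_trans hC2 ?_
            exact mul_le_mul_of_nonneg_left hd hC.le
        _ = C * Real.log 2 + 2 * C * Real.log N := by ring
        _ ≤ (C * Real.log 2 / L) * Real.log N + 2 * C * Real.log N := by linarith
        _ = B * Real.log N := by ring
  -- exponentiate
  calc ‖(ρ g : Matrix (Fin 2) (Fin 2) ℂ)‖
      = Real.exp (Real.log ‖(ρ g : Matrix (Fin 2) (Fin 2) ℂ)‖) := (Real.exp_log hMpos).symm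
    _ ≤ Real.exp ((n : ℝ) * Real.log N) := Real.exp_le_exp.mpr hkey
    _ = N ^ n := by
        rw [Real.exp_nat_mul, Real.exp_log hNpos]
end
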